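/- Let F ∈ ℝ_{≥0}[s, ν_b, ν_w][[t]] be a power series all of whose monomials t^m s^g ν_b^a ν_w^b (with nonnegative coefficients) satisfy m ≥ a + b. Fix reals x, y > 0 and let Ξ be the evaluation ν_b := x, ν_w := y. Then for every integer k ≥ 0, Ξ(Λ^k F) ≥ 2^k t^{2k} (min(y², x))^k D_t^k (Ξ F), coefficientwise in s and t, where Λ := 2t²((ν_w² + ν_b) D_t + ν_w (1 − ν_b ν_w) ∂_b + (1 − ν_b ν_w) ∂_w) and D_t = t ∂/∂t. -/

import Mathlib

namespace Stmt7

/-- Formal power series in t, s, ν_b, ν_w with real coefficients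
(variable 0 = t, 1 = s, 2 = ν_b, 3 = ν_w). -/
abbrev R4 : Type := MvPowerSeries (Fin 4) ℝ

noncomputable def T : R4 := MvPowerSeries.X 0
noncomputable def B : R4 := MvPowerSeries.X 2
noncomputable def W : R4 := MvPowerSeries.X 3

/-- D_t = t ∂/∂t. -/
noncomputable def Dt (f : R4) : R4 := fun d => (d 0 : ℝ) * f d
/-- ∂/∂ν_b. -/
noncomputable def pb (f : R4) : R4 := fun d => ((d 2 : ℕ) + 1 : ℝ) * f (d + Finsupp.single 2 1)
/-- ∂/∂ν_w. -/
noncomputable def pw (f : R4) : R4 := fun d => ((d 3 : ℕ) + 1 : ℝ) * f (d + Finsupp.single 3 1)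

/-- Λ := 2t²((ν_w² + ν_b) D_t + ν_w (1 − ν_b ν_w) ∂_b + (1 − ν_b ν_w) ∂_w). -/
noncomputable def Lam (f : R4) : R4 :=
  2 * T ^ 2 * ((W ^ 2 + B) * Dt f + W * (1 - B * W) * pb f + (1 - B * W) * pw f)

/-- Membership in the semiring 𝔸: all coefficients are nonnegative and every monomial
t^m s^g ν_b^a ν_w^b appearing satisfies m ≥ a + b. -/
def A : Set R4 :=
  {f | ∀ d : Fin 4 →₀ ℕ, 0 ≤ MvPowerSeries.coeff d f ∧
    (MvPowerSeries.coeff d f ≠ 0 → d 2 + d 3 ≤ d 0)}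

/-- The evaluation Ξ at ν_b = x, ν_w = y, producing a series in t and s, given by its
coefficients (exponent of t, exponent of s) ↦ coefficient.  (For F ∈ 𝔸 the inner sum is
finite since only exponents a + b ≤ m contribute.) -/
noncomputable def Xi (x y : ℝ) (F : R4) : ℕ → ℕ → ℝ := fun m g =>
  ∑ a ∈ Finset.range (m + 1), ∑ b ∈ Finset.range (m + 1),
    MvPowerSeries.coeff
      (Finsupp.single (0 : Fin 4) m + Finsupp.single 1 g
        + Finsupp.single 2 a + Finsupp.single 3 b) F * x ^ a * y ^ b

/-- D_t = t d/dt acting on series in t (and s). -/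
def Dt' (h : ℕ → ℕ → ℝ) : ℕ → ℕ → ℝ := fun m g => (m : ℝ) * h m g

/-- Multiplication by t^j acting on series in t (and s). -/
def tmul (j : ℕ) (h : ℕ → ℕ → ℝ) : ℕ → ℕ → ℝ := fun m g =>
  if j ≤ m then h (m - j) g else 0

noncomputable def idx (m g a b : ℕ) : Fin 4 →₀ ℕ :=
  Finsupp.single (0 : Fin 4) m + Finsupp.single 1 g + Finsupp.single 2 a + Finsupp.single 3 b

lemma idx0 (m g a b : ℕ) : idx m g a b 0 = m := by simp [idx]
lemma idx1 (m g a b : ℕ) : idx m g a b 1 = g := by simp [idx]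
lemma idx2 (m g a b : ℕ) : idx m g a b 2 = a := by simp [idx]
lemma idx3 (m g a b : ℕ) : idx m g a b 3 = b := by simp [idx]

lemma idx_le (p q r s m g a b : ℕ) :
    idx p q r s ≤ idx m g a b ↔ p ≤ m ∧ q ≤ g ∧ r ≤ a ∧ s ≤ b := by
  constructor
  · intro h
    exact ⟨by simpa [idx0] using h 0, by simpa [idx1] using h 1,
      by simpa [idx2] using h 2, by simpa [idx3] using h 3⟩
  · rintro ⟨h0, h1, h2, h3⟩ i
    fin_cases i <;> simpa [idx0, idx1, idx2, idx3]

lemma idx_sub (p q r s m g a b : ℕ) :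
    idx m g a b - idx p q r s = idx (m - p) (g - q) (a - r) (b - s) := by
  ext i
  rw [Finsupp.tsub_apply]
  fin_cases i <;> simp [idx0, idx1, idx2, idx3]

noncomputable def cf (F : R4) (m g a b : ℕ) : ℝ := MvPowerSeries.coeff (idx m g a b) F

lemma coeff_mono_mul (c : ℝ) (G : R4) (p q r s m g a b : ℕ) :
    MvPowerSeries.coeff (idx m g a b) (MvPowerSeries.monomial (idx p q r s) c * G)
    = if p ≤ m ∧ q ≤ g ∧ r ≤ a ∧ s ≤ b then
        c * MvPowerSeries.coeff (idx (m - p) (g - q) (a - r) (b - s)) G else 0 := by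
  rw [MvPowerSeries.coeff_monomial_mul, idx_sub]
  simp only [idx_le]

lemma coeff_two (d : Fin 4 →₀ ℕ) (z : R4) :
    MvPowerSeries.coeff d (2 * z) = 2 * MvPowerSeries.coeff d z := by
  rw [two_mul, map_add, two_mul]

lemma mTW2 : T ^ 2 * W ^ 2 = MvPowerSeries.monomial (idx 2 0 0 2) 1 := by
  have h : (Finsupp.single (0 : Fin 4) 2 + Finsupp.single 3 2) = idx 2 0 0 2 := by
    ext i; fin_cases i <;> simp [idx]
  rw [T, W, MvPowerSeries.X_pow_eq, MvPowerSeries.X_pow_eq,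
    MvPowerSeries.monomial_mul_monomial, one_mul, h]

lemma mTB : T ^ 2 * B = MvPowerSeries.monomial (idx 2 0 1 0) 1 := by
  have h : (Finsupp.single (0 : Fin 4) 2 + Finsupp.single 2 1) = idx 2 0 1 0 := by
    ext i; fin_cases i <;> simp [idx]
  rw [T, B, MvPowerSeries.X_pow_eq, MvPowerSeries.X_def,
    MvPowerSeries.monomial_mul_monomial, one_mul, h]

lemma mTW : T ^ 2 * W = MvPowerSeries.monomial (idx 2 0 0 1) 1 := by
  have h : (Finsupp.single (0 : Fin 4) 2 + Finsupp.single 3 1) = idx 2 0 0 1 := by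
    ext i; fin_cases i <;> simp [idx]
  rw [T, W, MvPowerSeries.X_pow_eq, MvPowerSeries.X_def,
    MvPowerSeries.monomial_mul_monomial, one_mul, h]

lemma mTBW2 : T ^ 2 * (B * W ^ 2) = MvPowerSeries.monomial (idx 2 0 1 2) 1 := by
  have h : (Finsupp.single (0 : Fin 4) 2 + (Finsupp.single 2 1 + Finsupp.single 3 2)) = idx 2 0 1 2 := by
    ext i; fin_cases i <;> simp [idx]
  rw [T, B, W, MvPowerSeries.X_pow_eq, MvPowerSeries.X_pow_eq, MvPowerSeries.X_def,
    MvPowerSeries.monomial_mul_monomial, MvPowerSeries.monomial_mul_monomial, one_mul, one_mul, h]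

lemma mT2 : T ^ 2 = MvPowerSeries.monomial (idx 2 0 0 0) 1 := by
  have h : (Finsupp.single (0 : Fin 4) 2) = idx 2 0 0 0 := by
    ext i; fin_cases i <;> simp [idx]
  rw [T, MvPowerSeries.X_pow_eq, h]

lemma mTBW : T ^ 2 * (B * W) = MvPowerSeries.monomial (idx 2 0 1 1) 1 := by
  have h : (Finsupp.single (0 : Fin 4) 2 + (Finsupp.single 2 1 + Finsupp.single 3 1)) = idx 2 0 1 1 := by
    ext i; fin_cases i <;> simp [idx]
  rw [T, B, W, MvPowerSeries.X_pow_eq, MvPowerSeries.X_def, MvPowerSeries.X_def,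
    MvPowerSeries.monomial_mul_monomial, MvPowerSeries.monomial_mul_monomial, one_mul, one_mul, h]

lemma cf_Dt (f : R4) (m g a b : ℕ) :
    MvPowerSeries.coeff (idx m g a b) (Dt f) = (m : ℝ) * cf f m g a b := by
  rw [MvPowerSeries.coeff_apply, Dt, cf, MvPowerSeries.coeff_apply, idx0]

lemma idx_add2 (m g a b : ℕ) : idx m g a b + Finsupp.single 2 1 = idx m g (a + 1) b := by
  ext i; fin_cases i <;> simp [idx]

lemma idx_add3 (m g a b : ℕ) : idx m g a b + Finsupp.single 3 1 = idx m g a (b + 1) := by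
  ext i; fin_cases i <;> simp [idx]

lemma cf_pb (f : R4) (m g a b : ℕ) :
    MvPowerSeries.coeff (idx m g a b) (pb f) = ((a : ℝ) + 1) * cf f m g (a + 1) b := by
  rw [MvPowerSeries.coeff_apply, pb, cf, MvPowerSeries.coeff_apply, idx2, idx_add2]

lemma cf_pw (f : R4) (m g a b : ℕ) :
    MvPowerSeries.coeff (idx m g a b) (pw f) = ((b : ℝ) + 1) * cf f m g a (b + 1) := by
  rw [MvPowerSeries.coeff_apply, pw, cf, MvPowerSeries.coeff_apply, idx3, idx_add3]

lemma cf_Lam (f : R4) (m g a b : ℕ) :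
    cf (Lam f) m g a b =
      2 * ((if 2 ≤ m ∧ 2 ≤ b then ((m - 2 : ℕ) : ℝ) * cf f (m - 2) g a (b - 2) else 0)
         + (if 2 ≤ m ∧ 1 ≤ a then ((m - 2 : ℕ) : ℝ) * cf f (m - 2) g (a - 1) b else 0)
         + (if 2 ≤ m ∧ 1 ≤ b then ((a : ℝ) + 1) * cf f (m - 2) g (a + 1) (b - 1) else 0)
         - (if 2 ≤ m ∧ 1 ≤ a ∧ 2 ≤ b then (((a - 1 : ℕ) : ℝ) + 1) * cf f (m - 2) g ((a - 1) + 1) (b - 2) else 0)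
         + (if 2 ≤ m then ((b : ℝ) + 1) * cf f (m - 2) g a (b + 1) else 0)
         - (if 2 ≤ m ∧ 1 ≤ a ∧ 1 ≤ b then (((b - 1 : ℕ) : ℝ) + 1) * cf f (m - 2) g (a - 1) ((b - 1) + 1) else 0)) := by
  have hz : Lam f
      = 2 * (T ^ 2 * W ^ 2 * Dt f + T ^ 2 * B * Dt f + T ^ 2 * W * pb f
        - T ^ 2 * (B * W ^ 2) * pb f + T ^ 2 * pw f - T ^ 2 * (B * W) * pw f) := by
    rw [Lam]; ring
  rw [cf, hz, coeff_two, mTW2, mTB, mTW, mTBW2, mTBW, mT2, map_sub, map_add, map_sub, map_add,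
    map_add, coeff_mono_mul, coeff_mono_mul, coeff_mono_mul, coeff_mono_mul, coeff_mono_mul,
    coeff_mono_mul]
  simp only [Nat.zero_le, true_and, and_true, Nat.sub_zero, cf_Dt, cf_pb, cf_pw, one_mul]


lemma idx_eq (d : Fin 4 →₀ ℕ) : d = idx (d 0) (d 1) (d 2) (d 3) := by
  ext i
  fin_cases i <;> simp [idx0, idx1, idx2, idx3]

lemma mem_A {F : R4} (h : F ∈ A) (m g a b : ℕ) :
    0 ≤ cf F m g a b ∧ (cf F m g a b ≠ 0 → a + b ≤ m) := by
  have := h (idx m g a b)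
  rwa [idx0, idx2, idx3] at this

lemma A_of {F : R4} (h : ∀ m g a b, 0 ≤ cf F m g a b ∧ (cf F m g a b ≠ 0 → a + b ≤ m)) :
    F ∈ A := by
  intro d
  have h2 := h (d 0) (d 1) (d 2) (d 3)
  rw [cf] at h2
  rw [idx_eq d]
  simpa [idx0, idx2, idx3] using h2

lemma Xi_eq (x y : ℝ) (F : R4) (m g : ℕ) :
    Xi x y F m g = ∑ a ∈ Finset.range (m + 1), ∑ b ∈ Finset.range (m + 1),
      cf F m g a b * x ^ a * y ^ b := rfl

/-- The 4-term form of the Λ coefficient. -/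
lemma cf_Lam' (f : R4) (m g a b : ℕ) :
    cf (Lam f) (m + 2) g a b =
      2 * ((if 2 ≤ b then ((m : ℝ) - a) * cf f m g a (b - 2) else 0)
         + (if 1 ≤ a then ((m : ℝ) - b) * cf f m g (a - 1) b else 0)
         + (if 1 ≤ b then ((a : ℝ) + 1) * cf f m g (a + 1) (b - 1) else 0)
         + ((b : ℝ) + 1) * cf f m g a (b + 1)) := by
  rw [cf_Lam]
  have h2 : 2 ≤ m + 2 := by omega
  simp only [h2, true_and, if_true, Nat.add_sub_cancel]
  rcases a with _ | a <;> rcases b with _ | _ | b <;>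
    · simp only [show ¬(1:ℕ) ≤ 0 by omega, show ¬(2:ℕ) ≤ 0 by omega, show ¬(2:ℕ) ≤ 1 by omega,
        show (1:ℕ) ≤ 1 by omega, Nat.le_add_left, if_true, if_false, Nat.add_sub_cancel,
        Nat.succ_sub_one, true_and, and_true, and_self]
      push_cast
      ring

lemma cf_Lam_lt (f : R4) (m g a b : ℕ) (hm : m < 2) : cf (Lam f) m g a b = 0 := by
  rw [cf_Lam]
  simp [show ¬ 2 ≤ m by omega]

lemma Lam_mem_A {f : R4} (hf : f ∈ A) : Lam f ∈ A := by
  apply A_of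
  intro m g a b
  rcases Nat.lt_or_ge m 2 with hm | hm
  · simp [cf_Lam_lt f m g a b hm]
  · obtain ⟨m', rfl⟩ : ∃ m', m = m' + 2 := ⟨m - 2, by omega⟩
    rw [cf_Lam']
    have h1 := mem_A hf m' g a (b - 2)
    have h2 := mem_A hf m' g (a - 1) b
    have h3 := mem_A hf m' g (a + 1) (b - 1)
    have h4 := mem_A hf m' g a (b + 1)
    have t1 : 0 ≤ (if 2 ≤ b then ((m' : ℝ) - a) * cf f m' g a (b - 2) else 0) := by
      split_ifs with h
      · rcases eq_or_ne (cf f m' g a (b - 2)) 0 with h0 | h0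
        · simp [h0]
        · have hle := h1.2 h0
          have ha : (a : ℝ) ≤ m' := by exact_mod_cast le_trans (Nat.le_add_right _ _) hle
          exact mul_nonneg (by linarith) h1.1
      · exact le_refl 0
    have t2 : 0 ≤ (if 1 ≤ a then ((m' : ℝ) - b) * cf f m' g (a - 1) b else 0) := by
      split_ifs with h
      · rcases eq_or_ne (cf f m' g (a - 1) b) 0 with h0 | h0
        · simp [h0]
        · have hle := h2.2 h0
          have hb : (b : ℝ) ≤ m' := by exact_mod_cast le_trans (Nat.le_add_left _ _) hle
          exact mul_nonneg (by linarith) h2.1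
      · exact le_refl 0
    have t3 : 0 ≤ (if 1 ≤ b then ((a : ℝ) + 1) * cf f m' g (a + 1) (b - 1) else 0) := by
      split_ifs with h
      · exact mul_nonneg (by positivity) h3.1
      · exact le_refl 0
    have t4 : 0 ≤ ((b : ℝ) + 1) * cf f m' g a (b + 1) := mul_nonneg (by positivity) h4.1
    constructor
    · positivity
    · intro hne
      by_contra hcon
      push_neg at hcon
      have e1 : (if 2 ≤ b then ((m' : ℝ) - a) * cf f m' g a (b - 2) else 0) = 0 := by
        split_ifs with h
        · rcases eq_or_ne (cf f m' g a (b - 2)) 0 with h0 | h0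
          · simp [h0]
          · exact absurd (h1.2 h0) (by omega)
        · rfl
      have e2 : (if 1 ≤ a then ((m' : ℝ) - b) * cf f m' g (a - 1) b else 0) = 0 := by
        split_ifs with h
        · rcases eq_or_ne (cf f m' g (a - 1) b) 0 with h0 | h0
          · simp [h0]
          · exact absurd (h2.2 h0) (by omega)
        · rfl
      have e3 : (if 1 ≤ b then ((a : ℝ) + 1) * cf f m' g (a + 1) (b - 1) else 0) = 0 := by
        split_ifs with h
        · rcases eq_or_ne (cf f m' g (a + 1) (b - 1)) 0 with h0 | h0
          · simp [h0]
          · exact absurd (h3.2 h0) (by omega)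
        · rfl
      have e4 : ((b : ℝ) + 1) * cf f m' g a (b + 1) = 0 := by
        rcases eq_or_ne (cf f m' g a (b + 1)) 0 with h0 | h0
        · simp [h0]
        · exact absurd (h4.2 h0) (by omega)
      rw [e1, e2, e3, e4] at hne
      simp at hne

lemma shift2 (F : ℕ → ℝ) (n : ℕ) (h0 : F 0 = 0) (h1 : F 1 = 0) :
    ∑ b ∈ Finset.range (n + 2), F b = ∑ b ∈ Finset.range n, F (b + 2) := by
  rw [Finset.sum_range_succ', Finset.sum_range_succ', h0]
  simp [h1]

lemma shift1 (F : ℕ → ℝ) (n : ℕ) (h0 : F 0 = 0) :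
    ∑ b ∈ Finset.range (n + 1), F b = ∑ b ∈ Finset.range n, F (b + 1) := by
  rw [Finset.sum_range_succ', h0, add_zero]

lemma trim (F : ℕ → ℝ) (n j : ℕ) (h : ∀ i, n ≤ i → F i = 0) :
    ∑ b ∈ Finset.range (n + j), F b = ∑ b ∈ Finset.range n, F b := by
  induction j with
  | zero => rfl
  | succ j ih =>
    rw [show n + (j + 1) = (n + j) + 1 by omega, Finset.sum_range_succ, h _ (by omega), add_zero, ih]

lemma Xi_nonneg (x y : ℝ) (hx : 0 < x) (hy : 0 < y) {F : R4} (hF : F ∈ A) (m g : ℕ) :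
    0 ≤ Xi x y F m g := by
  rw [Xi_eq]
  apply Finset.sum_nonneg
  intro a _
  apply Finset.sum_nonneg
  intro b _
  have := (mem_A hF m g a b).1
  positivity

lemma step (x y : ℝ) (hx : 0 < x) (hy : 0 < y) {f : R4} (hf : f ∈ A) (m g : ℕ) :
    2 * min (y ^ 2) x * ((m : ℝ) * Xi x y f m g) ≤ Xi x y (Lam f) (m + 2) g := by
  have hmin : 0 < min (y ^ 2) x := lt_min (by positivity) hx
  have hmy : min (y ^ 2) x ≤ y ^ 2 := min_le_left _ _
  have hmx : min (y ^ 2) x ≤ x := min_le_right _ _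
  have czero : ∀ a b : ℕ, m < a + b → cf f m g a b = 0 := by
    intro a b h
    by_contra hne
    exact absurd ((mem_A hf m g a b).2 hne) (by omega)
  calc 2 * min (y ^ 2) x * ((m : ℝ) * Xi x y f m g)
      = ∑ a ∈ Finset.range (m + 1), ∑ b ∈ Finset.range (m + 1),
          2 * min (y ^ 2) x * (m : ℝ) * (cf f m g a b * x ^ a * y ^ b) := by
        rw [Xi_eq]
        simp only [Finset.mul_sum]
        exact Finset.sum_congr rfl fun a _ => Finset.sum_congr rfl fun b _ => by ring
    _ ≤ ∑ a ∈ Finset.range (m + 1), ∑ b ∈ Finset.range (m + 1),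
          (2 * ((m : ℝ) - a) * cf f m g a b * x ^ a * y ^ (b + 2)
           + 2 * ((m : ℝ) - b) * cf f m g a b * x ^ (a + 1) * y ^ b) := by
        apply Finset.sum_le_sum
        intro a ha
        apply Finset.sum_le_sum
        intro b hb
        rw [Finset.mem_range] at ha hb
        rcases eq_or_ne (cf f m g a b) 0 with h0 | h0
        · simp [h0]
        · have hab := (mem_A hf m g a b).2 h0
          have hc := (mem_A hf m g a b).1
          have haR : (a : ℝ) + b ≤ m := by exact_mod_cast hab
          have haR1 : (a : ℝ) ≤ m := by
            have : a ≤ m := by omega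
            exact_mod_cast this
          have hbR1 : (b : ℝ) ≤ m := by
            have : b ≤ m := by omega
            exact_mod_cast this
          have key : (m : ℝ) * min (y ^ 2) x ≤ ((m : ℝ) - a) * y ^ 2 + ((m : ℝ) - b) * x := by
            nlinarith [mul_le_mul_of_nonneg_left hmy (by linarith : (0:ℝ) ≤ (m : ℝ) - a),
              mul_le_mul_of_nonneg_left hmx (by linarith : (0:ℝ) ≤ (m : ℝ) - b)]
          have hP : 0 ≤ cf f m g a b * x ^ a * y ^ b := by positivity
          have := mul_le_mul_of_nonneg_left key (by linarith : (0:ℝ) ≤ 2 * (cf f m g a b * x ^ a * y ^ b))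
          calc 2 * min (y ^ 2) x * (m : ℝ) * (cf f m g a b * x ^ a * y ^ b)
              = 2 * (cf f m g a b * x ^ a * y ^ b) * ((m : ℝ) * min (y ^ 2) x) := by ring
            _ ≤ 2 * (cf f m g a b * x ^ a * y ^ b) * (((m : ℝ) - a) * y ^ 2 + ((m : ℝ) - b) * x) := this
            _ = 2 * ((m : ℝ) - a) * cf f m g a b * x ^ a * y ^ (b + 2)
                 + 2 * ((m : ℝ) - b) * cf f m g a b * x ^ (a + 1) * y ^ b := by ring
    _ = (∑ a ∈ Finset.range (m + 1), ∑ b ∈ Finset.range (m + 1),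
          2 * ((m : ℝ) - a) * cf f m g a b * x ^ a * y ^ (b + 2))
        + (∑ a ∈ Finset.range (m + 1), ∑ b ∈ Finset.range (m + 1),
          2 * ((m : ℝ) - b) * cf f m g a b * x ^ (a + 1) * y ^ b) := by
        rw [← Finset.sum_add_distrib]
        exact Finset.sum_congr rfl fun a _ => Finset.sum_add_distrib
    _ ≤ ∑ a ∈ Finset.range (m + 3), ∑ b ∈ Finset.range (m + 3),
          cf (Lam f) (m + 2) g a b * x ^ a * y ^ b := by
        have hU1 : (∑ a ∈ Finset.range (m + 3), ∑ b ∈ Finset.range (m + 3),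
              2 * (if 2 ≤ b then ((m : ℝ) - a) * cf f m g a (b - 2) else 0) * x ^ a * y ^ b)
            = ∑ a ∈ Finset.range (m + 1), ∑ b ∈ Finset.range (m + 1),
              2 * ((m : ℝ) - a) * cf f m g a b * x ^ a * y ^ (b + 2) := by
          have inner : ∀ a : ℕ, (∑ b ∈ Finset.range (m + 3),
                2 * (if 2 ≤ b then ((m : ℝ) - a) * cf f m g a (b - 2) else 0) * x ^ a * y ^ b)
              = ∑ b ∈ Finset.range (m + 1),
                2 * ((m : ℝ) - a) * cf f m g a b * x ^ a * y ^ (b + 2) := by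
            intro a
            rw [show m + 3 = (m + 1) + 2 by omega, shift2 _ (m + 1) (by norm_num) (by norm_num)]
            refine Finset.sum_congr rfl fun b _ => ?_
            rw [if_pos (by omega : 2 ≤ b + 2), Nat.add_sub_cancel]
            ring
          rw [Finset.sum_congr rfl fun a _ => inner a,
            show m + 3 = (m + 1) + 2 by omega,
            trim _ (m + 1) 2 fun a ha => Finset.sum_eq_zero fun b _ => by
              rw [czero a b (by omega)]; ring]
        have hU2 : (∑ a ∈ Finset.range (m + 3), ∑ b ∈ Finset.range (m + 3),
              2 * (if 1 ≤ a then ((m : ℝ) - b) * cf f m g (a - 1) b else 0) * x ^ a * y ^ b)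
            = ∑ a ∈ Finset.range (m + 1), ∑ b ∈ Finset.range (m + 1),
              2 * ((m : ℝ) - b) * cf f m g a b * x ^ (a + 1) * y ^ b := by
          rw [show m + 3 = (m + 2) + 1 by omega,
            shift1 _ (m + 2) (by
              refine Finset.sum_eq_zero fun b _ => ?_
              rw [if_neg (by omega)]; ring)]
          have inner : ∀ a : ℕ, (∑ b ∈ Finset.range ((m + 2) + 1),
                2 * (if 1 ≤ a + 1 then ((m : ℝ) - b) * cf f m g (a + 1 - 1) b else 0) * x ^ (a + 1) * y ^ b)
              = ∑ b ∈ Finset.range (m + 1),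
                2 * ((m : ℝ) - b) * cf f m g a b * x ^ (a + 1) * y ^ b := by
            intro a
            calc (∑ b ∈ Finset.range ((m + 2) + 1),
                  2 * (if 1 ≤ a + 1 then ((m : ℝ) - b) * cf f m g (a + 1 - 1) b else 0) * x ^ (a + 1) * y ^ b)
                = ∑ b ∈ Finset.range ((m + 1) + 2),
                  2 * ((m : ℝ) - b) * cf f m g a b * x ^ (a + 1) * y ^ b := by
                  rw [show (m + 2) + 1 = (m + 1) + 2 by omega]
                  refine Finset.sum_congr rfl fun b _ => ?_
                  rw [if_pos (by omega : 1 ≤ a + 1), Nat.add_sub_cancel]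
                  ring
              _ = ∑ b ∈ Finset.range (m + 1),
                  2 * ((m : ℝ) - b) * cf f m g a b * x ^ (a + 1) * y ^ b :=
                  trim (fun b => 2 * ((m : ℝ) - b) * cf f m g a b * x ^ (a + 1) * y ^ b) (m + 1) 2
                    fun b hb => by
                      show 2 * ((m : ℝ) - b) * cf f m g a b * x ^ (a + 1) * y ^ b = 0
                      rw [czero a b (by omega)]; ring
          rw [Finset.sum_congr rfl fun a _ => inner a,
            show m + 2 = (m + 1) + 1 by omega,
            trim _ (m + 1) 1 fun a ha => Finset.sum_eq_zero fun b _ => by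
              rw [czero a b (by omega)]; ring]
        rw [← hU1, ← hU2, ← Finset.sum_add_distrib]
        rw [Finset.sum_congr rfl fun a (_ : a ∈ Finset.range (m + 3)) => Finset.sum_add_distrib.symm]
        apply Finset.sum_le_sum
        intro a _
        apply Finset.sum_le_sum
        intro b _
        have h3 := mem_A hf m g (a + 1) (b - 1)
        have h4 := mem_A hf m g a (b + 1)
        have t3 : 0 ≤ (if 1 ≤ b then ((a : ℝ) + 1) * cf f m g (a + 1) (b - 1) else 0) := by
          split_ifs with h
          · exact mul_nonneg (by positivity) h3.1
          · exact le_refl 0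
        have t4 : 0 ≤ ((b : ℝ) + 1) * cf f m g a (b + 1) := mul_nonneg (by positivity) h4.1
        have hP : (0 : ℝ) ≤ x ^ a * y ^ b := by positivity
        calc 2 * (if 2 ≤ b then ((m : ℝ) - a) * cf f m g a (b - 2) else 0) * x ^ a * y ^ b
              + 2 * (if 1 ≤ a then ((m : ℝ) - b) * cf f m g (a - 1) b else 0) * x ^ a * y ^ b
            = 2 * ((if 2 ≤ b then ((m : ℝ) - a) * cf f m g a (b - 2) else 0)
                + (if 1 ≤ a then ((m : ℝ) - b) * cf f m g (a - 1) b else 0)) * (x ^ a * y ^ b) := by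
              ring
          _ ≤ 2 * ((if 2 ≤ b then ((m : ℝ) - a) * cf f m g a (b - 2) else 0)
                + (if 1 ≤ a then ((m : ℝ) - b) * cf f m g (a - 1) b else 0)
                + (if 1 ≤ b then ((a : ℝ) + 1) * cf f m g (a + 1) (b - 1) else 0)
                + ((b : ℝ) + 1) * cf f m g a (b + 1)) * (x ^ a * y ^ b) := by
              apply mul_le_mul_of_nonneg_right _ hP
              linarith
          _ = cf (Lam f) (m + 2) g a b * x ^ a * y ^ b := by rw [cf_Lam']; ring
    _ = Xi x y (Lam f) (m + 2) g := (Xi_eq x y (Lam f) (m + 2) g).symm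

lemma Dt_iter (h : ℕ → ℕ → ℝ) (k m g : ℕ) : Dt'^[k] h m g = (m : ℝ) ^ k * h m g := by
  induction k with
  | zero => simp
  | succ k ih =>
    rw [Function.iterate_succ_apply']
    show (m : ℝ) * (Dt'^[k] h m g) = _
    rw [ih, pow_succ]
    ring

theorem key (x y : ℝ) (hx : 0 < x) (hy : 0 < y) :
    ∀ k (F : R4), F ∈ A → ∀ m g : ℕ,
    (2 ^ k * (min (y ^ 2) x) ^ k) * tmul (2 * k) (Dt'^[k] (Xi x y F)) m g
      ≤ Xi x y (Lam^[k] F) m g := by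
  intro k
  induction k with
  | zero => intro F hF m g; simp [tmul]
  | succ k ih =>
    intro F hF m g
    have hmin : 0 < min (y ^ 2) x := lt_min (by positivity) hx
    rw [Function.iterate_succ_apply]
    refine le_trans ?_ (ih (Lam F) (Lam_mem_A hF) m g)
    simp only [tmul]
    by_cases h1 : 2 * (k + 1) ≤ m
    · have h2 : 2 * k ≤ m := by omega
      rw [if_pos h1, if_pos h2, Dt_iter, Dt_iter]
      set m' := m - 2 * (k + 1) with hm'
      rw [show m - 2 * k = m' + 2 by omega]
      have hstep := step x y hx hy hF m' g
      have hXiL : 0 ≤ Xi x y (Lam F) (m' + 2) g := Xi_nonneg x y hx hy (Lam_mem_A hF) _ _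
      have c1 : ((m' : ℕ) : ℝ) ^ k ≤ ((m' : ℝ) + 2) ^ k := by
        apply pow_le_pow_left₀ (by positivity)
        linarith
      simp only [Dt']
      calc 2 ^ (k + 1) * min (y ^ 2) x ^ (k + 1) * ((m' : ℝ) ^ k * ((m' : ℝ) * Xi x y F m' g))
          = (2 ^ k * min (y ^ 2) x ^ k * (m' : ℝ) ^ k)
              * (2 * min (y ^ 2) x * ((m' : ℝ) * Xi x y F m' g)) := by ring
        _ ≤ (2 ^ k * min (y ^ 2) x ^ k * (m' : ℝ) ^ k) * Xi x y (Lam F) (m' + 2) g := by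
            apply mul_le_mul_of_nonneg_left hstep
            positivity
        _ ≤ (2 ^ k * min (y ^ 2) x ^ k * ((m' : ℝ) + 2) ^ k) * Xi x y (Lam F) (m' + 2) g := by
            apply mul_le_mul_of_nonneg_right _ hXiL
            have h2p : (0:ℝ) ≤ 2 ^ k * min (y ^ 2) x ^ k := by positivity
            calc 2 ^ k * min (y ^ 2) x ^ k * (m' : ℝ) ^ k
                ≤ 2 ^ k * min (y ^ 2) x ^ k * ((m' : ℝ) + 2) ^ k :=
                  mul_le_mul_of_nonneg_left c1 h2p
              _ = _ := rfl
        _ = 2 ^ k * min (y ^ 2) x ^ k * ((((m' + 2 : ℕ)) : ℝ) ^ k * Xi x y (Lam F) (m' + 2) g) := by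
            push_cast
            ring
    · rw [if_neg h1, mul_zero]
      split_ifs with h2
      · rw [Dt_iter]
        have := Xi_nonneg x y hx hy (Lam_mem_A hF) (m - 2 * k) g
        positivity
      · rw [mul_zero]


/-- for x, y > 0, F ∈ 𝔸 and every k ≥ 0,
Ξ(Λ^k F) ≥ 2^k t^{2k} (min(y²,x))^k D_t^k (Ξ F), coefficientwise in s and t. -/
theorem stmt_7 (x y : ℝ) (hx : 0 < x) (hy : 0 < y) (F : R4) (hF : F ∈ A)
    (k : ℕ) (m g : ℕ) :
    (2 ^ k * (min (y ^ 2) x) ^ k) * tmul (2 * k) (Dt'^[k] (Xi x y F)) m g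
      ≤ Xi x y (Lam^[k] F) m g := by
  exact key x y hx hy k F hF m g

end Stmt7
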